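/- Let A be a finite generating set of ℤ² and let B ⊂ ℝ² be the convex hull of A ∪ (−A). If a₁, a₂ ∈ A ∪ (−A) are adjacent vertices of the polygon B and i₁, i₂ are nonnegative integers, then the word obtained by concatenating i₁ copies of a₁ and i₂ copies of a₂ is a geodesic word in A; that is, |i₁a₁ + i₂a₂|_A = i₁ + i₂. -/

import Mathlib

open Pointwise

/-- The word length `|v|_A` of `v ∈ ℤ²` with respect to the finite generating set `A`:
the length of a shortest word in the letters of `A` and their inverses (negatives)
representing `v`. -/
noncomputable def wlenZ2 (A : Finset (ℤ × ℤ)) (v : ℤ × ℤ) : ℕ :=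
  sInf {n | ∃ w : List (ℤ × ℤ), (∀ a ∈ w, a ∈ A ∨ -a ∈ A) ∧ w.length = n ∧ w.sum = v}

/-- The standard embedding of `ℤ²` into `ℝ²`. -/
def toR2 (v : ℤ × ℤ) : ℝ × ℝ := ((v.1 : ℝ), (v.2 : ℝ))

lemma toR2_add (x y : ℤ × ℤ) : toR2 (x + y) = toR2 x + toR2 y := by
  simp [toR2, Prod.ext_iff]

lemma toR2_neg (x : ℤ × ℤ) : toR2 (-x) = -toR2 x := by
  simp [toR2, Prod.ext_iff]

lemma toR2_nsmul (i : ℕ) (x : ℤ × ℤ) : toR2 (i • x) = (i : ℝ) • toR2 x := by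
  simp [toR2, Prod.ext_iff]

lemma toR2_list_sum (l : List (ℤ × ℤ)) : toR2 l.sum = (l.map toR2).sum := by
  induction l with
  | nil => simp [toR2]
  | cons a t ih => simp [toR2_add, ih]

lemma smul_list_sum_mem {B : Set (ℝ × ℝ)} (hBc : Convex ℝ B) (h0 : (0 : ℝ × ℝ) ∈ B) :
    ∀ l : List (ℝ × ℝ), (∀ x ∈ l, x ∈ B) → ∀ c : ℝ, 0 ≤ c → c * l.length ≤ 1 →
      c • l.sum ∈ B := by
  intro l
  induction l with
  | nil => intro _ c _ _; simpa using h0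
  | cons a t ih =>
    intro hmem c hc hlen
    have ha : a ∈ B := hmem a List.mem_cons_self
    have htn : (0:ℝ) ≤ (t.length : ℝ) := Nat.cast_nonneg _
    have hlen' : c * (t.length : ℝ) + c ≤ 1 := by
      push_cast [List.length_cons] at hlen; linarith [hlen]
    have hc1 : c ≤ 1 := by nlinarith
    rcases eq_or_lt_of_le hc1 with h1 | h1
    · have ht0 : (t.length : ℝ) = 0 := by nlinarith
      have : t = [] := List.length_eq_zero_iff.mp (by exact_mod_cast ht0)
      subst this
      rw [h1]
      simpa using ha
    · have h1c : 0 < 1 - c := by linarith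
      set c' := c / (1 - c) with hc'
      have hc'0 : 0 ≤ c' := div_nonneg hc (le_of_lt h1c)
      have hc'len : c' * (t.length : ℝ) ≤ 1 := by
        rw [hc', div_mul_eq_mul_div, div_le_one h1c]; linarith
      have hmemt : ∀ x ∈ t, x ∈ B := fun x hx => hmem x (List.mem_cons_of_mem a hx)
      have h2 := ih hmemt c' hc'0 hc'len
      have h3 := hBc ha h2 hc (le_of_lt h1c) (by ring)
      have heq : c • (a :: t).sum = c • a + (1 - c) • (c' • t.sum) := by
        rw [List.sum_cons, smul_add, smul_smul]
        congr 2
        rw [hc']; field_simp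
      rw [heq]; exact h3

/-- Let `A` be a finite generating set of `ℤ²` and let `B ⊂ ℝ²` be the convex
hull of `A ∪ (-A)`. If `a₁, a₂ ∈ A ∪ (-A)` are adjacent vertices of the polygon `B` (distinct
extreme points of `B` joined by an edge, i.e. whose segment is an extreme (face) subset of `B`)
and `i₁, i₂` are nonnegative integers, then `i₁ a₁ + i₂ a₂` has word length exactly `i₁ + i₂`. -/
theorem geodesic_from_adjacent_vertices
    (A : Finset (ℤ × ℤ)) (hA : AddSubgroup.closure (A : Set (ℤ × ℤ)) = ⊤)
    (B : Set (ℝ × ℝ))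
    (hB : B = convexHull ℝ (toR2 '' ((A : Set (ℤ × ℤ)) ∪ (-(A : Set (ℤ × ℤ))))))
    (a₁ a₂ : ℤ × ℤ)
    (ha₁ : a₁ ∈ A ∨ -a₁ ∈ A) (ha₂ : a₂ ∈ A ∨ -a₂ ∈ A)
    (hne : a₁ ≠ a₂)
    (hv₁ : toR2 a₁ ∈ Set.extremePoints ℝ B)
    (hv₂ : toR2 a₂ ∈ Set.extremePoints ℝ B)
    (hadj : IsExtreme ℝ B (segment ℝ (toR2 a₁) (toR2 a₂)))
    (i₁ i₂ : ℕ) :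
    wlenZ2 A (i₁ • a₁ + i₂ • a₂) = i₁ + i₂ := by
  have hwmem : (i₁ + i₂) ∈ {n | ∃ w : List (ℤ × ℤ),
      (∀ a ∈ w, a ∈ A ∨ -a ∈ A) ∧ w.length = n ∧ w.sum = i₁ • a₁ + i₂ • a₂} := by
    refine ⟨List.replicate i₁ a₁ ++ List.replicate i₂ a₂, ?_, by simp, by
      simp [List.sum_replicate]⟩
    intro a ha
    rcases List.mem_append.mp ha with h | h
    · rw [List.eq_of_mem_replicate h]; exact ha₁
    · rw [List.eq_of_mem_replicate h]; exact ha₂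
  unfold wlenZ2
  refine le_antisymm (Nat.sInf_le hwmem) (le_csInf ⟨_, hwmem⟩ ?_)
  rintro n ⟨w, hw, rfl, hsum⟩
  by_contra hlt
  push_neg at hlt
  set m := i₁ + i₂ with hm
  have hm0 : 0 < m := lt_of_le_of_lt (Nat.zero_le _) hlt
  have hmR : (0:ℝ) < (m:ℝ) := by exact_mod_cast hm0
  have hmR' : (m:ℝ) ≠ 0 := ne_of_gt hmR
  have hBconv : Convex ℝ B := by rw [hB]; exact convex_convexHull ℝ _
  have hmemB : ∀ a : ℤ × ℤ, (a ∈ A ∨ -a ∈ A) → toR2 a ∈ B := by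
    intro a ha
    rw [hB]
    apply subset_convexHull
    rcases ha with h | h
    · exact ⟨a, Or.inl h, rfl⟩
    · exact ⟨a, Or.inr (Set.mem_neg.mpr h), rfl⟩
  have hsymm : ∀ a : ℤ × ℤ, (a ∈ A ∨ -a ∈ A) → -toR2 a ∈ B := by
    intro a ha
    rw [← toR2_neg]
    apply hmemB
    rcases ha with h | h
    · exact Or.inr (by simpa)
    · exact Or.inl (by simpa)
  have h0B : (0 : ℝ × ℝ) ∈ B := by
    have h3 := hBconv (hmemB a₁ ha₁) (hsymm a₁ ha₁)
      (by norm_num : (0:ℝ) ≤ 1/2) (by norm_num : (0:ℝ) ≤ 1/2) (by norm_num)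
    simpa using h3
  -- the scaled point lies on the edge
  have hVq : (m:ℝ)⁻¹ • toR2 (i₁ • a₁ + i₂ • a₂) ∈ segment ℝ (toR2 a₁) (toR2 a₂) := by
    refine ⟨(i₁ : ℝ)/m, (i₂ : ℝ)/m, by positivity, by positivity, ?_, ?_⟩
    · rw [← add_div, show ((i₁:ℝ) + (i₂:ℝ)) = (m:ℝ) by rw [hm]; push_cast; ring,
        div_self hmR']
    · rw [toR2_add, toR2_nsmul, toR2_nsmul]
      match_scalars <;> field_simp
  have h0S : (0 : ℝ × ℝ) ∈ segment ℝ (toR2 a₁) (toR2 a₂) := by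
    rcases Nat.eq_zero_or_pos w.length with h0 | hpos
    · have hz : toR2 (i₁ • a₁ + i₂ • a₂) = 0 := by
        rw [← hsum, List.length_eq_zero_iff.mp h0]; simp [toR2]
      rw [hz, smul_zero] at hVq
      exact hVq
    · have hnR : (0:ℝ) < (w.length : ℝ) := by exact_mod_cast hpos
      have hnR' : (w.length : ℝ) ≠ 0 := ne_of_gt hnR
      have hp : (w.length : ℝ)⁻¹ • (w.map toR2).sum ∈ B := by
        apply smul_list_sum_mem hBconv h0B
        · intro x hx
          rcases List.mem_map.mp hx with ⟨a, ha, rfl⟩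
          exact hmemB a (hw a ha)
        · positivity
        · rw [List.length_map, inv_mul_cancel₀ hnR']
      have hltR : (w.length : ℝ) < (m:ℝ) := by exact_mod_cast hlt
      have hopen : (m:ℝ)⁻¹ • toR2 (i₁ • a₁ + i₂ • a₂) ∈
          openSegment ℝ ((w.length : ℝ)⁻¹ • (w.map toR2).sum) 0 := by
        refine ⟨(w.length:ℝ)/m, ((m:ℝ) - w.length)/m, by positivity,
          div_pos (by linarith) hmR, by field_simp; ring, ?_⟩
        rw [smul_zero, add_zero, smul_smul, ← hsum, toR2_list_sum]
        congr 1
        field_simp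
      exact hadj.right_mem_of_mem_openSegment hp h0B hVq hopen
  have hAS : ∀ a ∈ A, toR2 a ∈ segment ℝ (toR2 a₁) (toR2 a₂) := by
    intro a ha
    have hb : toR2 a ∈ B := hmemB a (Or.inl ha)
    have hnb : -toR2 a ∈ B := hsymm a (Or.inl ha)
    have hopen : (0 : ℝ × ℝ) ∈ openSegment ℝ (toR2 a) (-toR2 a) := by
      refine ⟨1/2, 1/2, by norm_num, by norm_num, by norm_num, ?_⟩
      rw [smul_neg]; abel
    exact hadj.left_mem_of_mem_openSegment hb hnb h0S hopen
  obtain ⟨u, v, hu0, hv0, huv, hval⟩ := h0S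
  have e1 : u * (a₁.1:ℝ) + v * (a₂.1:ℝ) = 0 := by
    have := congrArg Prod.fst hval
    simpa [toR2] using this
  have e2 : u * (a₁.2:ℝ) + v * (a₂.2:ℝ) = 0 := by
    have := congrArg Prod.snd hval
    simpa [toR2] using this
  have hcross : (a₁.1:ℝ) * (a₂.2:ℝ) - (a₁.2:ℝ) * (a₂.1:ℝ) = 0 := by
    linear_combination (a₂.2:ℝ)*e1 - (a₂.1:ℝ)*e2 - (a₁.2:ℝ)*e1 + (a₁.1:ℝ)*e2
      - ((a₁.1:ℝ)*(a₂.2:ℝ) - (a₁.2:ℝ)*(a₂.1:ℝ))*huv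
  have g1 : ∀ a ∈ A, a₁.1 * a.2 - a₁.2 * a.1 = 0 ∧ a₂.1 * a.2 - a₂.2 * a.1 = 0 := by
    intro a ha
    obtain ⟨t, s, ht0, hs0, hts, hval2⟩ := hAS a ha
    have f1 : t * (a₁.1:ℝ) + s * (a₂.1:ℝ) = (a.1:ℝ) := by
      have := congrArg Prod.fst hval2
      simpa [toR2] using this
    have f2 : t * (a₁.2:ℝ) + s * (a₂.2:ℝ) = (a.2:ℝ) := by
      have := congrArg Prod.snd hval2
      simpa [toR2] using this
    constructor
    · have : (a₁.1:ℝ) * (a.2:ℝ) - (a₁.2:ℝ) * (a.1:ℝ) = 0 := by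
        linear_combination (a₁.2:ℝ)*f1 - (a₁.1:ℝ)*f2 + s*hcross
      exact_mod_cast this
    · have : (a₂.1:ℝ) * (a.2:ℝ) - (a₂.2:ℝ) * (a.1:ℝ) = 0 := by
        linear_combination (a₂.2:ℝ)*f1 - (a₂.1:ℝ)*f2 - t*hcross
      exact_mod_cast this
  let K : AddSubgroup (ℤ × ℤ) :=
    { carrier := {p | a₁.1 * p.2 - a₁.2 * p.1 = 0 ∧ a₂.1 * p.2 - a₂.2 * p.1 = 0}
      zero_mem' := by simp
      add_mem' := by
        rintro x y ⟨hx1, hx2⟩ ⟨hy1, hy2⟩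
        refine ⟨?_, ?_⟩ <;> simp only [Prod.fst_add, Prod.snd_add]
        · linear_combination hx1 + hy1
        · linear_combination hx2 + hy2
      neg_mem' := by
        rintro x ⟨hx1, hx2⟩
        refine ⟨?_, ?_⟩ <;> simp only [Prod.fst_neg, Prod.snd_neg]
        · linear_combination -hx1
        · linear_combination -hx2 }
  have hKtop : ∀ p : ℤ × ℤ, p ∈ K := by
    have h1 : AddSubgroup.closure (A : Set (ℤ × ℤ)) ≤ K :=
      (AddSubgroup.closure_le K).mpr (fun a ha => g1 a ha)
    rw [hA] at h1
    intro p; exact h1 trivial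
  obtain ⟨hx1, hx2⟩ := hKtop (1, 0)
  obtain ⟨hy1, hy2⟩ := hKtop (0, 1)
  simp at hx1 hx2 hy1 hy2
  exact hne (Prod.ext_iff.mpr ⟨by omega, by omega⟩)
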